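/- Let (L, [,], ∘) be a post-Lie algebra over a field k, equip L̂ := L × L with the Lie bracket ⟦(a,b),(c,d)⟧ := (a∘c − c∘a + [a,c], a∘d − c∘b + [b,d]), and let R(a, b) := (b − a, 0). Then the map ι : L → L̂, ι(a) := (0, a), is injective and satisfies ⟦R(ι(a)), ι(b)⟧ = ι(a∘b) and ⟦ι(a), ι(b)⟧ = ι([a, b]) for all a, b ∈ L; hence ι is an injective homomorphism of post-Lie algebras from L into the post-Lie algebra structure on L̂ induced by the weight-1 Rota–Baxter operator R (with operations x ∘' y := ⟦R(x), y⟧ and ⟨x, y⟩' := 1·⟦x, y⟧). -/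
import Mathlib


/-- For a post-Lie algebra `(L, [,], ∘)` with hat bracket
`⟦(a,b),(c,d)⟧ := (a∘c − c∘a + [a,c], a∘d − c∘b + [b,d])` on `L̂ := L × L` and
Rota–Baxter operator `R(a, b) := (b − a, 0)` of weight `1`, the map `ι(a) := (0, a)` is
injective and satisfies `⟦R(ι(a)), ι(b)⟧ = ι(a∘b)` and `⟦ι(a), ι(b)⟧ = ι([a,b])`;
i.e. `ι` is an injective post-Lie homomorphism into the post-Lie structure on `L̂`
induced by `R` (with `x ∘' y := ⟦R x, y⟧` and `⟨x, y⟩' := 1 • ⟦x, y⟧`). -/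
theorem postlie_embeds_into_hat (k L : Type*) [Field k] [LieRing L] [LieAlgebra k L]
    (o : L →ₗ[k] L →ₗ[k] L)
    (h1 : ∀ x y z : L,
      o (o x y) z - o x (o y z) - o (o y x) z + o y (o x z) = o ⁅y, x⁆ z)
    (h2 : ∀ x y z : L, o x ⁅y, z⁆ = ⁅o x y, z⁆ + ⁅y, o x z⁆) :
    ∀ (B : L × L → L × L → L × L) (R : L × L → L × L) (ι : L → L × L),
      (B = fun u v => (o u.1 v.1 - o v.1 u.1 + ⁅u.1, v.1⁆,
                       o u.1 v.2 - o v.1 u.2 + ⁅u.2, v.2⁆)) →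
      (R = fun u => (u.2 - u.1, 0)) →
      (ι = fun a => ((0 : L), a)) →
      Function.Injective ι ∧
      (∀ a b : L, B (R (ι a)) (ι b) = ι (o a b)) ∧
      (∀ a b : L, B (ι a) (ι b) = ι ⁅a, b⁆) := by
  rintro B R ι rfl rfl rfl
  refine ⟨fun a b h => congrArg Prod.snd h, fun a b => ?_, fun a b => ?_⟩ <;>
    simp [Prod.ext_iff]
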